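/- Let U be a nonempty finite set, Δ ≥ 0 a real number, and p_A, q_A, p_B, q_B : U → [0,1] functions such that each of τ(u) := p_A(u)p_B(u), ν_A(u) := p_A(u)q_A(u), ν_B(u) := p_B(u)q_B(u) sums to 1 over U. Define a(u) := (1/(|U|·2^{2Δ})) · min(p_A(u), 2^Δ q_B(u)) · min(p_B(u), 2^Δ q_A(u)), the bad set B := {u ∈ U : 2^Δ ν_A(u) < τ(u) or 2^Δ ν_B(u) < τ(u)}, and γ := ∑_{u ∈ B} τ(u). Assume γ < 1, so that η := ∑_{u ∈ U} a(u) > 0, and define the conditional distribution τ'(u) := a(u)/η. Then for every subset T ⊆ U, ∑_{u ∈ T} τ(u) − ∑_{u ∈ T} τ'(u) ≤ γ; consequently the statistical (total variation) distance between τ and τ' is at most γ. -/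

import Mathlib

open Finset

/-- In the single sampling experiment, if the bad-set mass `γ < 1`, then the
total acceptance probability `η = ∑_u a(u)` is positive, and the conditional output
distribution `τ'(u) = a(u)/η` satisfies `τ(T) - τ'(T) ≤ γ` for every `T ⊆ U`; consequently
the statistical distance between `τ` and `τ'` is at most `γ`. -/
theorem statement_3 {U : Type*} [Fintype U] [Nonempty U]
    (Δ : ℝ) (hΔ : 0 ≤ Δ)
    (pA qA pB qB : U → ℝ)
    (hpA : ∀ u, pA u ∈ Set.Icc (0 : ℝ) 1) (hqA : ∀ u, qA u ∈ Set.Icc (0 : ℝ) 1)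
    (hpB : ∀ u, pB u ∈ Set.Icc (0 : ℝ) 1) (hqB : ∀ u, qB u ∈ Set.Icc (0 : ℝ) 1)
    (hτ : ∑ u, pA u * pB u = 1)
    (hνA : ∑ u, pA u * qA u = 1)
    (hνB : ∑ u, pB u * qB u = 1)
    (a : U → ℝ)
    (ha : ∀ u, a u = (1 / ((Fintype.card U : ℝ) * (2 : ℝ) ^ (2 * Δ))) *
        min (pA u) ((2 : ℝ) ^ Δ * qB u) * min (pB u) ((2 : ℝ) ^ Δ * qA u))
    (γ : ℝ)
    (hγ : γ = ∑ u ∈ univ.filter (fun u =>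
        (2 : ℝ) ^ Δ * (pA u * qA u) < pA u * pB u ∨
        (2 : ℝ) ^ Δ * (pB u * qB u) < pA u * pB u), pA u * pB u)
    (hγ1 : γ < 1)
    (η : ℝ) (hη : η = ∑ u, a u) :
    0 < η ∧
    (∀ T : Finset U, ∑ u ∈ T, pA u * pB u - ∑ u ∈ T, a u / η ≤ γ) ∧
    (∀ T : Finset U, |∑ u ∈ T, pA u * pB u - ∑ u ∈ T, a u / η| ≤ γ) := by
  classical
  have hN : (0:ℝ) < Fintype.card U := by
    exact_mod_cast Fintype.card_pos
  set c : ℝ := 1 / ((Fintype.card U : ℝ) * (2 : ℝ) ^ (2 * Δ)) with hc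
  have h2Δ : (0:ℝ) < (2:ℝ) ^ (2*Δ) := Real.rpow_pos_of_pos two_pos _
  have hcpos : 0 < c := div_pos one_pos (mul_pos hN h2Δ)
  set P : U → Prop := fun u =>
        (2 : ℝ) ^ Δ * (pA u * qA u) < pA u * pB u ∨
        (2 : ℝ) ^ Δ * (pB u * qB u) < pA u * pB u with hP
  have hexp : (0:ℝ) < (2:ℝ) ^ Δ := Real.rpow_pos_of_pos two_pos _
  -- basic nonnegativity
  have hτnn : ∀ u, 0 ≤ pA u * pB u := fun u => mul_nonneg (hpA u).1 (hpB u).1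
  have hann : ∀ u, 0 ≤ a u := by
    intro u
    rw [ha u]
    have := (hpA u).1; have := (hpB u).1; have := (hqA u).1; have := (hqB u).1
    have h1 : 0 ≤ min (pA u) ((2:ℝ)^Δ * qB u) := le_min ‹0 ≤ pA u› (by positivity)
    have h2 : 0 ≤ min (pB u) ((2:ℝ)^Δ * qA u) := le_min ‹0 ≤ pB u› (by positivity)
    positivity
  have hale : ∀ u, a u ≤ c * (pA u * pB u) := by
    intro u
    rw [ha u, mul_assoc]
    have h2 : 0 ≤ min (pB u) ((2:ℝ)^Δ * qA u) := le_min (hpB u).1 (by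
      have := (hqA u).1; positivity)
    exact mul_le_mul_of_nonneg_left
      (mul_le_mul (min_le_left _ _) (min_le_left _ _) h2 (hpA u).1) hcpos.le
  have haeq : ∀ u, ¬ P u → a u = c * (pA u * pB u) := by
    intro u hu
    rw [hP] at hu
    simp only [not_or, not_lt] at hu
    obtain ⟨h1, h2⟩ := hu
    rw [ha u, mul_assoc]
    congr 1
    rcases eq_or_lt_of_le (hpA u).1 with hA0 | hA0
    · rcases eq_or_lt_of_le (hpB u).1 with hB0 | hB0
      · rw [← hA0, ← hB0]; simp
        exact Or.inl (by have := (hqB u).1; positivity)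
      · -- pA u = 0
        have : min (pA u) ((2:ℝ)^Δ * qB u) = 0 := by
          rw [← hA0]; exact min_eq_left (by have := (hqB u).1; positivity)
        rw [this, ← hA0]; ring
    · rcases eq_or_lt_of_le (hpB u).1 with hB0 | hB0
      · have : min (pB u) ((2:ℝ)^Δ * qA u) = 0 := by
          rw [← hB0]; exact min_eq_left (by have := (hqA u).1; positivity)
        rw [this, ← hB0]; ring
      · -- both positive
        have e1 : min (pA u) ((2:ℝ)^Δ * qB u) = pA u := by
          apply min_eq_left
          have : pA u * pB u ≤ ((2:ℝ)^Δ * qB u) * pB u := by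
            calc pA u * pB u ≤ (2:ℝ)^Δ * (pB u * qB u) := h2
            _ = ((2:ℝ)^Δ * qB u) * pB u := by ring
          exact le_of_mul_le_mul_right this hB0
        have e2 : min (pB u) ((2:ℝ)^Δ * qA u) = pB u := by
          apply min_eq_left
          have : pB u * pA u ≤ ((2:ℝ)^Δ * qA u) * pA u := by
            calc pB u * pA u = pA u * pB u := by ring
            _ ≤ (2:ℝ)^Δ * (pA u * qA u) := h1
            _ = ((2:ℝ)^Δ * qA u) * pA u := by ring
          exact le_of_mul_le_mul_right this hA0
        rw [e1, e2]
  have hγnn : 0 ≤ γ := by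
    rw [hγ]
    exact sum_nonneg fun u _ => hτnn u
  -- η bounds
  have hηle : η ≤ c := by
    calc η = ∑ u, a u := hη
    _ ≤ ∑ u, c * (pA u * pB u) := sum_le_sum fun u _ => hale u
    _ = c * ∑ u, pA u * pB u := by rw [mul_sum]
    _ = c := by rw [hτ, mul_one]
  have hsplit : ∑ u ∈ univ.filter P, (pA u * pB u)
      + ∑ u ∈ univ.filter (fun u => ¬ P u), (pA u * pB u) = 1 := by
    rw [sum_filter_add_sum_filter_not, hτ]
  have hηge : c * (1 - γ) ≤ η := by
    have : c * (1 - γ) = ∑ u ∈ univ.filter (fun u => ¬ P u), a u := by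
      rw [sum_congr rfl (fun u hu => haeq u (mem_filter.mp hu).2), ← mul_sum]
      congr 1
      rw [hγ]
      linarith [hsplit]
    rw [this, hη]
    exact sum_le_sum_of_subset_of_nonneg (subset_univ _) (fun u _ _ => hann u)
  have hηpos : 0 < η := lt_of_lt_of_le (by nlinarith) hηge
  -- key one-sided bound
  have key : ∀ T : Finset U, ∑ u ∈ T, pA u * pB u - ∑ u ∈ T, a u / η ≤ γ := by
    intro T
    have hTnn : 0 ≤ ∑ u ∈ T, a u := sum_nonneg fun u _ => hann u
    have h1 : (∑ u ∈ T, a u) / c ≤ ∑ u ∈ T, a u / η := by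
      rw [← sum_div]
      exact div_le_div_of_nonneg_left hTnn hηpos hηle
    have h2 : ∑ u ∈ T, pA u * pB u - (∑ u ∈ T, a u) / c ≤ γ := by
      rw [sum_div, ← sum_sub_distrib]
      calc ∑ u ∈ T, (pA u * pB u - a u / c)
          = ∑ u ∈ T.filter P, (pA u * pB u - a u / c)
            + ∑ u ∈ T.filter (fun u => ¬ P u), (pA u * pB u - a u / c) := by
            rw [sum_filter_add_sum_filter_not]
        _ ≤ ∑ u ∈ T.filter P, (pA u * pB u) + 0 := by
            apply add_le_add
            · exact sum_le_sum fun u _ => by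
                have := hann u
                have : 0 ≤ a u / c := div_nonneg (hann u) hcpos.le
                linarith
            · apply le_of_eq
              apply sum_eq_zero
              intro u hu
              rw [haeq u (mem_filter.mp hu).2]
              field_simp
              ring
        _ ≤ γ := by
            rw [add_zero, hγ]
            exact sum_le_sum_of_subset_of_nonneg
              (filter_subset_filter _ (subset_univ T)) (fun u _ _ => hτnn u)
    linarith
  refine ⟨hηpos, key, ?_⟩
  intro T
  rw [abs_le]
  refine ⟨?_, key T⟩
  have hsum1 : ∑ u, a u / η = 1 := by
    rw [← sum_div, ← hη, div_self hηpos.ne']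
  have hcompl1 : ∑ u ∈ T, pA u * pB u + ∑ u ∈ Tᶜ, pA u * pB u = 1 := by
    rw [sum_add_sum_compl, hτ]
  have hcompl2 : ∑ u ∈ T, a u / η + ∑ u ∈ Tᶜ, a u / η = 1 := by
    rw [sum_add_sum_compl, hsum1]
  have := key Tᶜ
  linarith
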